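/- For every α ∈ (0,1) and distinct indices i ≠ j, the entry ((I − αS)^{-1})_{ij} is strictly positive if i and j are connected, and equals zero if i and j are not connected. -/

import Mathlib

open Matrix BigOperators Finset

attribute [local instance] Classical.propDecidable
attribute [local instance]
  Matrix.linftyOpNormedAddCommGroup Matrix.linftyOpNormedSpace
  Matrix.linftyOpNormedRing Matrix.linftyOpNormedAlgebra

/-- Row sum `d_i = Σ_j A_{ij}` of the affinity matrix. -/
noncomputable def rowSum {n : ℕ} (A : Matrix (Fin n) (Fin n) ℝ) (i : Fin n) : ℝ :=
  ∑ j, A i j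

/-- The normalized matrix `S = D^{-1/2} A D^{-1/2}`. -/
noncomputable def Smat {n : ℕ} (A : Matrix (Fin n) (Fin n) ℝ) : Matrix (Fin n) (Fin n) ℝ :=
  Matrix.diagonal (fun i => (Real.sqrt (rowSum A i))⁻¹) * A *
    Matrix.diagonal (fun i => (Real.sqrt (rowSum A i))⁻¹)

/-- Label matrix `Y` (indices `i` with `(i : ℕ) < l` are the labeled ones). -/
noncomputable def Ymat {n K : ℕ} (l : ℕ) (y : Fin n → Fin K) : Matrix (Fin n) (Fin K) ℝ :=
  fun i c => if (i : ℕ) < l ∧ y i = c then 1 else 0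

/-- `F* = (I - α S)^{-1} Y`. -/
noncomputable def Fstar {n K : ℕ} (l : ℕ) (y : Fin n → Fin K) (α : ℝ)
    (A : Matrix (Fin n) (Fin n) ℝ) : Matrix (Fin n) (Fin K) ℝ :=
  (1 - α • Smat A)⁻¹ * Ymat l y

/-- Instance `i` is correctly predicted: `F*_{i, y_i} > F*_{i, c}` for all `c ≠ y_i`. -/
def CorrectlyPredicted {n K : ℕ} (l : ℕ) (y : Fin n → Fin K) (α : ℝ)
    (A : Matrix (Fin n) (Fin n) ℝ) (i : Fin n) : Prop :=
  ∀ c : Fin K, c ≠ y i → Fstar l y α A i c < Fstar l y α A i (y i)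

/-- Accuracy on the unlabeled instances (those with `(i : ℕ) ≥ l`). -/
noncomputable def AccLP {n K : ℕ} (l : ℕ) (y : Fin n → Fin K) (α : ℝ)
    (A : Matrix (Fin n) (Fin n) ℝ) : ℝ :=
  ((Finset.univ.filter
      (fun i : Fin n => l ≤ (i : ℕ) ∧ CorrectlyPredicted l y α A i)).card : ℝ) /
    ((n : ℝ) - (l : ℝ))

/-- `i` and `j` are connected w.r.t. `B`: a finite sequence of at least one step
with positive affinities joins them. -/
def Connected {n : ℕ} (B : Matrix (Fin n) (Fin n) ℝ) : Fin n → Fin n → Prop :=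
  Relation.TransGen (fun i j => 0 < B i j)

lemma pow_apply_nonneg {n : ℕ} (P : Matrix (Fin n) (Fin n) ℝ) (hP : ∀ i j, 0 ≤ P i j) :
    ∀ (k : ℕ) (i j : Fin n), 0 ≤ (P ^ k) i j := by
  intro k
  induction k with
  | zero => intro i j; by_cases h : i = j <;> simp [pow_zero, Matrix.one_apply, h]
  | succ k ih =>
    intro i j
    rw [pow_succ, Matrix.mul_apply]
    exact Finset.sum_nonneg fun c _ => mul_nonneg (ih i c) (hP c j)

lemma connected_of_pow_pos {n : ℕ} (A P : Matrix (Fin n) (Fin n) ℝ)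
    (hP : ∀ i j, 0 ≤ P i j)
    (hPA : ∀ i j, 0 < P i j → 0 < A i j) :
    ∀ (k : ℕ) (i j : Fin n), 0 < (P ^ (k + 1)) i j → Connected A i j := by
  intro k
  induction k with
  | zero =>
    intro i j h
    rw [pow_one] at h
    exact Relation.TransGen.single (hPA _ _ h)
  | succ k ih =>
    intro i j h
    rw [pow_succ, Matrix.mul_apply] at h
    obtain ⟨c, -, hc⟩ : ∃ c ∈ Finset.univ, 0 < (P ^ (k + 1)) i c * P c j := by
      by_contra hall
      push_neg at hall
      have : ∑ c, (P ^ (k + 1)) i c * P c j ≤ 0 := Finset.sum_nonpos fun c hcm => hall c hcm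
      linarith
    have h1 : 0 < (P ^ (k + 1)) i c := by
      rcases (pow_apply_nonneg P hP (k + 1) i c).lt_or_eq with h' | h'
      · exact h'
      · rw [← h', zero_mul] at hc; exact absurd hc (lt_irrefl 0)
    have h2 : 0 < P c j := by
      rcases (hP c j).lt_or_eq with h' | h'
      · exact h'
      · rw [← h', mul_zero] at hc; exact absurd hc (lt_irrefl 0)
    exact (ih i c h1).tail (hPA _ _ h2)

lemma pow_pos_of_connected {n : ℕ} (A P : Matrix (Fin n) (Fin n) ℝ)
    (hP : ∀ i j, 0 ≤ P i j)
    (hAP : ∀ i j, 0 < A i j → 0 < P i j)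
    (i j : Fin n) (h : Connected A i j) : ∃ k : ℕ, 0 < (P ^ (k + 1)) i j := by
  induction h with
  | single hr => exact ⟨0, by rw [pow_one]; exact hAP _ _ hr⟩
  | @tail b c hab hbc ih =>
    obtain ⟨k, hk⟩ := ih
    refine ⟨k + 1, ?_⟩
    rw [pow_succ, Matrix.mul_apply]
    have hle : (P ^ (k + 1)) i b * P b c ≤ ∑ x, (P ^ (k + 1)) i x * P x c :=
      Finset.single_le_sum (f := fun x => (P ^ (k + 1)) i x * P x c) (fun x _ => mul_nonneg (pow_apply_nonneg P hP _ _ _) (hP _ _))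
        (Finset.mem_univ b)
    have hpos := mul_pos hk (hAP _ _ hbc)
    linarith

/-- for `α ∈ (0,1)` and `i ≠ j`, the off-diagonal entry of `(I - αS)⁻¹`
is strictly positive iff `i` and `j` are connected (and zero otherwise). -/
theorem inverse_entry_connectivity
    {n : ℕ} (hn : 0 < n)
    (A : Matrix (Fin n) (Fin n) ℝ)
    (hsym : A.IsSymm) (hnonneg : ∀ i j, 0 ≤ A i j) (hdiag : ∀ i, A i i = 0)
    (hrow : ∀ i, 0 < rowSum A i)
    (α : ℝ) (hα0 : 0 < α) (hα1 : α < 1)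
    (i j : Fin n) (hij : i ≠ j) :
    (Connected A i j → 0 < (1 - α • Smat A)⁻¹ i j) ∧
      (¬ Connected A i j → (1 - α • Smat A)⁻¹ i j = 0) := by
  have hd : ∀ i, 0 < rowSum A i := hrow
  set d : Fin n → ℝ := rowSum A with hd_def
  set e : Fin n → ℝ := fun i => Real.sqrt (d i) with he_def
  have he : ∀ i, 0 < e i := fun i => Real.sqrt_pos.2 (hd i)
  have hdee : ∀ i, d i = e i * e i := fun i => (Real.mul_self_sqrt (hd i).le).symm
  set P : Matrix (Fin n) (Fin n) ℝ := Matrix.of (fun a b => A a b / d a) with hP_def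
  have hPab : ∀ a b, P a b = A a b / d a := fun a b => rfl
  have hPnn : ∀ a b, 0 ≤ P a b := fun a b => div_nonneg (hnonneg a b) (hd a).le
  have hAP : ∀ a b, 0 < A a b → 0 < P a b := fun a b h => div_pos h (hd a)
  have hPA : ∀ a b, 0 < P a b → 0 < A a b := by
    intro a b h
    rcases (hnonneg a b).lt_or_eq with h' | h'
    · exact h'
    · rw [hPab, ← h', zero_div] at h; exact absurd h (lt_irrefl 0)
  -- norm bound
  have hnorm : ‖α • P‖ < 1 := by
    have h2 : ‖P‖ ≤ 1 := by
      rw [Matrix.linfty_opNorm_def]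
      have : ((Finset.univ : Finset (Fin n)).sup fun a => ∑ b, ‖P a b‖₊) ≤ 1 := by
        apply Finset.sup_le
        intro a _
        have hrowsum : ∑ b, P a b = 1 := by
          simp only [hPab, ← Finset.sum_div]
          exact div_self (hd a).ne'
        have : ((∑ b, ‖P a b‖₊ : NNReal) : ℝ) = 1 := by
          push_cast
          simp only [coe_nnnorm, Real.norm_eq_abs]
          rw [← hrowsum]
          exact Finset.sum_congr rfl fun b _ => abs_of_nonneg (hPnn a b)
        exact_mod_cast this.le
      exact_mod_cast this
    have h1 : ‖α • P‖ = α * ‖P‖ := by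
      rw [norm_smul, Real.norm_eq_abs, abs_of_pos hα0]
    rw [h1]
    nlinarith [norm_nonneg P]
  have hsummable : Summable (fun k : ℕ => (α • P) ^ k) :=
    summable_geometric_of_norm_lt_one hnorm
  set T : Matrix (Fin n) (Fin n) ℝ := ∑' k : ℕ, (α • P) ^ k with hT_def
  have hT1 : (1 - α • P) * T = 1 := mul_neg_geom_series _ hnorm
  -- similarity
  set E : Matrix (Fin n) (Fin n) ℝ := Matrix.diagonal e with hE_def
  set E' : Matrix (Fin n) (Fin n) ℝ := Matrix.diagonal (fun a => (e a)⁻¹) with hE'_def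
  have hEE' : E * E' = 1 := by
    rw [hE_def, hE'_def, Matrix.diagonal_mul_diagonal]
    have h : (fun a => e a * (e a)⁻¹) = fun _ => (1 : ℝ) :=
      funext fun a => mul_inv_cancel₀ (he a).ne'
    rw [h, Matrix.diagonal_one]
  have hE'E : E' * E = 1 := by
    rw [hE_def, hE'_def, Matrix.diagonal_mul_diagonal]
    have h : (fun a => (e a)⁻¹ * e a) = fun _ => (1 : ℝ) :=
      funext fun a => inv_mul_cancel₀ (he a).ne'
    rw [h, Matrix.diagonal_one]
  have hsq : ∀ a : Fin n, Real.sqrt (rowSum A a) = e a := fun a => rfl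
  have hEPE : E * P * E' = Smat A := by
    ext a b
    rw [Smat]
    simp only [hE_def, hE'_def, Matrix.mul_diagonal, Matrix.diagonal_mul, hPab, hsq]
    rw [hdee a]
    field_simp
  have hSim : 1 - α • Smat A = E * (1 - α • P) * E' := by
    rw [Matrix.mul_sub, Matrix.sub_mul, Matrix.mul_one, hEE', Matrix.mul_smul,
      Matrix.smul_mul, hEPE]
  have hinv : (1 - α • Smat A)⁻¹ = E * T * E' := by
    apply Matrix.inv_eq_right_inv
    rw [hSim]
    calc E * (1 - α • P) * E' * (E * T * E')
        = E * ((1 - α • P) * (E' * E) * T) * E' := by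
          simp only [Matrix.mul_assoc]
      _ = E * ((1 - α • P) * T) * E' := by rw [hE'E, Matrix.mul_one]
      _ = E * E' := by rw [hT1, Matrix.mul_one]
      _ = 1 := hEE'
  have hentry : (1 - α • Smat A)⁻¹ i j = e i * T i j * (e j)⁻¹ := by
    rw [hinv, hE_def, hE'_def, Matrix.mul_diagonal, Matrix.diagonal_mul]
  -- entrywise tsum
  let φlin : Matrix (Fin n) (Fin n) ℝ →ₗ[ℝ] ℝ :=
    { toFun := fun M => M i j
      map_add' := fun M N => rfl
      map_smul' := fun c M => rfl }
  let φ : Matrix (Fin n) (Fin n) ℝ →L[ℝ] ℝ := LinearMap.toContinuousLinearMap φlin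
  have hφ : ∀ M : Matrix (Fin n) (Fin n) ℝ, φ M = M i j := fun M => rfl
  have hTentry : T i j = ∑' k : ℕ, α ^ k * (P ^ k) i j := by
    have h1 : φ T = ∑' k : ℕ, φ ((α • P) ^ k) := φ.map_tsum hsummable
    rw [hφ] at h1
    rw [h1]
    apply tsum_congr
    intro k
    rw [hφ, smul_pow, Matrix.smul_apply, smul_eq_mul]
  have hsumf : Summable (fun k : ℕ => α ^ k * (P ^ k) i j) := by
    have h1 : Summable (fun k : ℕ => φ ((α • P) ^ k)) :=
      hsummable.map φ.toLinearMap.toAddMonoidHom φ.continuous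
    apply h1.congr
    intro k
    rw [hφ, smul_pow, Matrix.smul_apply, smul_eq_mul]
  have hnn : ∀ k : ℕ, 0 ≤ α ^ k * (P ^ k) i j :=
    fun k => mul_nonneg (pow_nonneg hα0.le k) (pow_apply_nonneg P hPnn k i j)
  constructor
  · intro hconn
    obtain ⟨k, hk⟩ := pow_pos_of_connected A P hPnn hAP i j hconn
    have hpos : 0 < ∑' k : ℕ, α ^ k * (P ^ k) i j :=
      Summable.tsum_pos hsumf hnn (k + 1) (mul_pos (pow_pos hα0 _) hk)
    rw [hentry, hTentry]
    exact mul_pos (mul_pos (he i) hpos) (inv_pos.2 (he j))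
  · intro hnc
    rw [hentry, hTentry]
    have hz : ∀ k : ℕ, α ^ k * (P ^ k) i j = 0 := by
      intro k
      cases k with
      | zero => simp [Matrix.one_apply_ne hij]
      | succ k =>
        have h0 : (P ^ (k + 1)) i j = 0 := by
          rcases (pow_apply_nonneg P hPnn (k + 1) i j).lt_or_eq with h' | h'
          · exact absurd (connected_of_pow_pos A P hPnn hPA k i j h') hnc
          · exact h'.symm
        rw [h0, mul_zero]
    rw [tsum_congr hz, tsum_zero, mul_zero, zero_mul]
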